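/- Fix d ∈ (0,1) and Δ ≥ 0. Let 𝒫₁ be a finitely supported probability mass function on the positive integers with mean L(𝒫₁) = ℓ₁, let ℓ₂ > ℓ₁ be a real number, let N be an integer with N > ℓ₂, and set c = (ℓ₂ − ℓ₁)/(N − ℓ₁) ∈ (0,1). Define 𝒫₂ = (1−c)·𝒫₁ + c·δ_N, where δ_N is the point mass at N. Then L(𝒫₂) = ℓ₂ and h(𝒫₂) ≥ h(𝒫₁) − c·(Δ + R_mem(𝒫₁)). -/

import Mathlib

/-- A finitely supported probability mass function on the positive integers
(represented as a function on `ℕ` vanishing at `0`). -/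
def IsRunPMF (P : ℕ → ℝ) : Prop :=
  (∀ i, 0 ≤ P i) ∧ P 0 = 0 ∧ (Function.support P).Finite ∧ ∑' i : ℕ, P i = 1

/-- `P_{i→j} = C(i,j)·(1−d)^j·d^(i−j)`: the probability that a run of `i` bits
sent through the binary deletion channel with deletion probability `d` yields
`j` surviving bits (equal to `0` for `j > i`). -/
noncomputable def Ptrans (d : ℝ) (i j : ℕ) : ℝ :=
  (i.choose j : ℝ) * (1 - d) ^ j * d ^ (i - j)

/-- The run-length information rate
`R_mem(𝒫) = Σ_{i,j} 𝒫_i·P_{i→j}·log₂(P_{i→j} / Σ_{i'} 𝒫_{i'}·P_{i'→j})`,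
with terms whose numerator vanishes taken to be `0` (they are multiplied by the
vanishing factor `𝒫_i·P_{i→j}`). -/
noncomputable def Rmem (d : ℝ) (P : ℕ → ℝ) : ℝ :=
  ∑' i : ℕ, ∑' j : ℕ, P i * Ptrans d i j *
    Real.logb 2 (Ptrans d i j / (∑' i' : ℕ, P i' * Ptrans d i' j))

/-- The penalized rate `h(𝒫) = R_mem(𝒫) − Δ·Σ_i 𝒫_i·d^i`. -/
noncomputable def hPen (d Δ : ℝ) (P : ℕ → ℝ) : ℝ :=
  Rmem d P - Δ * ∑' i : ℕ, P i * d ^ i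

/-- The mean run length `L(𝒫) = Σ_i i·𝒫_i`. -/
noncomputable def Lmean (P : ℕ → ℝ) : ℝ :=
  ∑' i : ℕ, (i : ℝ) * P i

/-- `I(ℓ)`: the supremum of the penalized rate `h` over finitely supported
pmfs on the positive integers with mean run length `ℓ`. -/
noncomputable def Isup (d Δ ℓ : ℝ) : ℝ :=
  sSup { r | ∃ P : ℕ → ℝ, IsRunPMF P ∧ Lmean P = ℓ ∧ r = hPen d Δ P }



lemma Ptrans_nonneg {d : ℝ} (hd0 : 0 ≤ d) (hd1 : d ≤ 1) (i j : ℕ) : 0 ≤ Ptrans d i j := by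
  have h : (0:ℝ) ≤ 1 - d := by linarith
  unfold Ptrans; positivity

lemma Ptrans_zero {d : ℝ} {i j : ℕ} (h : i < j) : Ptrans d i j = 0 := by
  unfold Ptrans; rw [Nat.choose_eq_zero_of_lt h]; simp

lemma Ptrans_rowsum {d : ℝ} (i n : ℕ) (hin : i < n) :
    ∑ j ∈ Finset.range n, Ptrans d i j = 1 := by
  have h1 : ∑ j ∈ Finset.range (i+1), Ptrans d i j = 1 := by
    have h := add_pow (1 - d) d i
    simp only [sub_add_cancel, one_pow] at h
    rw [eq_comm, h]
    exact Finset.sum_congr rfl fun j _ => by unfold Ptrans; ring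
  rw [← h1]
  refine (Finset.sum_subset (Finset.range_subset_range.2 (by omega : i + 1 ≤ n)) ?_).symm
  intro j _ hj
  exact Ptrans_zero (by simp at hj; omega)

lemma gibbs (s : Finset ℕ) (p q : ℕ → ℝ) (hp : ∀ j ∈ s, 0 ≤ p j)
    (hq : ∀ j ∈ s, 0 ≤ q j) (hpq : ∀ j ∈ s, p j ≠ 0 → 0 < q j)
    (hsum : ∑ j ∈ s, q j ≤ ∑ j ∈ s, p j) :
    0 ≤ ∑ j ∈ s, p j * Real.logb 2 (p j / q j) := by
  have key : ∑ j ∈ s, p j * Real.log (q j / p j) ≤ 0 := by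
    calc ∑ j ∈ s, p j * Real.log (q j / p j) ≤ ∑ j ∈ s, (q j - p j) := by
          apply Finset.sum_le_sum
          intro j hj
          rcases eq_or_ne (p j) 0 with h | h
          · simp [h]; linarith [hq j hj]
          · have hppos : 0 < p j := (hp j hj).lt_of_ne' h
            have hqpos : 0 < q j := hpq j hj h
            have := Real.log_le_sub_one_of_pos (div_pos hqpos hppos)
            calc p j * Real.log (q j / p j) ≤ p j * (q j / p j - 1) := by
                  exact mul_le_mul_of_nonneg_left this (le_of_lt hppos)
              _ = q j - p j := by field_simp
      _ ≤ 0 := by rw [Finset.sum_sub_distrib]; linarith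
  have heq : ∑ j ∈ s, p j * Real.log (p j / q j) = - ∑ j ∈ s, p j * Real.log (q j / p j) := by
    rw [← Finset.sum_neg_distrib]
    apply Finset.sum_congr rfl
    intro j hj
    rcases eq_or_ne (p j) 0 with h | h
    · simp [h]
    · have hppos : 0 < p j := (hp j hj).lt_of_ne' h
      have hqpos : 0 < q j := hpq j hj h
      rw [show p j / q j = (q j / p j)⁻¹ by field_simp, Real.log_inv]
      ring
  have : 0 ≤ ∑ j ∈ s, p j * Real.log (p j / q j) := by rw [heq]; linarith
  have h2 : ∑ j ∈ s, p j * Real.logb 2 (p j / q j)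
      = (∑ j ∈ s, p j * Real.log (p j / q j)) / Real.log 2 := by
    rw [Finset.sum_div]
    exact Finset.sum_congr rfl fun j _ => by rw [Real.logb, mul_div_assoc]
  rw [h2]
  positivity

set_option maxHeartbeats 1000000 in
/-- Let `𝒫₁` be a finitely supported pmf on the positive
integers with mean `ℓ₁`, let `ℓ₂ > ℓ₁`, let `N` be an integer with `N > ℓ₂`,
and set `c = (ℓ₂ − ℓ₁)/(N − ℓ₁)`. Then `𝒫₂ = (1−c)·𝒫₁ + c·δ_N` satisfies
`L(𝒫₂) = ℓ₂` and `h(𝒫₂) ≥ h(𝒫₁) − c·(Δ + R_mem(𝒫₁))`. -/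
theorem mix_with_point_mass (d Δ : ℝ) (hd₀ : 0 < d) (hd₁ : d < 1) (hΔ : 0 ≤ Δ)
    (P₁ : ℕ → ℝ) (hP₁ : IsRunPMF P₁) (ℓ₁ ℓ₂ : ℝ) (hℓ₁ : Lmean P₁ = ℓ₁)
    (h₁₂ : ℓ₁ < ℓ₂) (N : ℕ) (hN : ℓ₂ < (N : ℝ))
    (c : ℝ) (hc : c = (ℓ₂ - ℓ₁) / ((N : ℝ) - ℓ₁))
    (P₂ : ℕ → ℝ) (hP₂ : P₂ = fun i => (1 - c) * P₁ i + c * (if i = N then 1 else 0)) :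
    Lmean P₂ = ℓ₂ ∧ hPen d Δ P₂ ≥ hPen d Δ P₁ - c * (Δ + Rmem d P₁) := by
  obtain ⟨hP1n, hP10, hP1fin, hP1sum⟩ := hP₁
  have hd0 : (0:ℝ) ≤ d := le_of_lt hd₀
  have hd1 : d ≤ 1 := le_of_lt hd₁
  obtain ⟨n, hNn, hP1z⟩ : ∃ n : ℕ, N < n ∧ ∀ i, n ≤ i → P₁ i = 0 := by
    refine ⟨max (hP1fin.toFinset.sup id) N + 1, ?_, ?_⟩
    · have := le_max_right (hP1fin.toFinset.sup id) N
      omega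
    · intro i hi
      by_contra h
      have h1 : i ∈ hP1fin.toFinset := hP1fin.mem_toFinset.2 h
      have h2 : i ≤ hP1fin.toFinset.sup id := Finset.le_sup (f := id) h1
      have := le_max_left (hP1fin.toFinset.sup id) N
      omega
  have hP1z' : ∀ i ∉ Finset.range n, P₁ i = 0 := fun i hi => hP1z i (by simpa using hi)
  have hl1 : 0 ≤ ℓ₁ := by
    rw [← hℓ₁]
    exact tsum_nonneg fun i => mul_nonneg (Nat.cast_nonneg i) (hP1n i)
  have hden : (0:ℝ) < (N:ℝ) - ℓ₁ := by linarith
  have hc0 : 0 < c := by rw [hc]; exact div_pos (by linarith) hden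
  have hc1 : c < 1 := by rw [hc, div_lt_one hden]; linarith
  have hcN : c * ((N:ℝ) - ℓ₁) = ℓ₂ - ℓ₁ := by rw [hc]; field_simp
  have hP2n : ∀ i, 0 ≤ P₂ i := by
    intro i
    simp only [hP₂]
    by_cases h : i = N <;> simp [h]
    · nlinarith [hP1n N, mul_nonneg (sub_nonneg.2 hc1.le) (hP1n N)]
    · nlinarith [hP1n i, mul_nonneg (sub_nonneg.2 hc1.le) (hP1n i)]
  have hP2z : ∀ i, n ≤ i → P₂ i = 0 := by
    intro i hi
    have h1 : i ≠ N := by omega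
    simp only [hP₂]
    simp [h1, hP1z i hi]
  have hP2z' : ∀ i ∉ Finset.range n, P₂ i = 0 := fun i hi => hP2z i (by simpa using hi)
  have hS1 : ∑ i ∈ Finset.range n, P₁ i = 1 := by
    rw [← tsum_eq_sum (L := SummationFilter.unconditional ℕ) hP1z']; exact hP1sum
  have hiteN : ∑ i ∈ Finset.range n, (if i = N then (1:ℝ) else 0) = 1 := by
    rw [Finset.sum_ite_eq' (Finset.range n) N (fun _ => (1:ℝ)), if_pos (Finset.mem_range.2 hNn)]
  have hS2 : ∑ i ∈ Finset.range n, P₂ i = 1 := by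
    simp only [hP₂]
    rw [Finset.sum_add_distrib, ← Finset.mul_sum, ← Finset.mul_sum, hS1, hiteN]
    ring
  -- mean of P₂
  have hL1 : ∑ i ∈ Finset.range n, (i:ℝ) * P₁ i = ℓ₁ := by
    rw [← hℓ₁]
    exact (tsum_eq_sum fun i hi => by rw [hP1z' i hi, mul_zero]).symm
  have hLN : ∑ i ∈ Finset.range n, (i:ℝ) * (if i = N then (1:ℝ) else 0) = N := by
    have : ∀ i ∈ Finset.range n, (i:ℝ) * (if i = N then (1:ℝ) else 0)
        = (if i = N then (N:ℝ) else 0) := by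
      intro i _
      by_cases h : i = N <;> simp [h]
    rw [Finset.sum_congr rfl this,
      Finset.sum_ite_eq' (Finset.range n) N (fun _ => (N:ℝ)), if_pos (Finset.mem_range.2 hNn)]
  have hLmean2 : Lmean P₂ = ℓ₂ := by
    unfold Lmean
    rw [tsum_eq_sum (s := Finset.range n) (fun i hi => by rw [hP2z' i hi, mul_zero])]
    simp only [hP₂]
    have hh : ∑ i ∈ Finset.range n, (i:ℝ) * ((1-c) * P₁ i + c * (if i = N then (1:ℝ) else 0))
        = (1-c) * (∑ i ∈ Finset.range n, (i:ℝ) * P₁ i)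
          + c * ∑ i ∈ Finset.range n, (i:ℝ) * (if i = N then (1:ℝ) else 0) := by
      rw [Finset.mul_sum, Finset.mul_sum, ← Finset.sum_add_distrib]
      exact Finset.sum_congr rfl fun i _ => by ring
    rw [hh, hL1, hLN]
    linarith [hcN]
  -- deletion-penalty sums
  have hD1 : ∑' i, P₁ i * d ^ i = ∑ i ∈ Finset.range n, P₁ i * d ^ i :=
    tsum_eq_sum fun i hi => by rw [hP1z' i hi, zero_mul]
  have hD2 : ∑' i, P₂ i * d ^ i ≤ (∑' i, P₁ i * d ^ i) + c := by
    rw [hD1, tsum_eq_sum (s := Finset.range n) (fun i hi => by rw [hP2z' i hi, zero_mul])]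
    have hsplit : ∑ i ∈ Finset.range n, P₂ i * d ^ i
        = (1-c) * ∑ i ∈ Finset.range n, P₁ i * d ^ i + c * d ^ N := by
      have hterm : ∀ i ∈ Finset.range n, P₂ i * d ^ i
          = (1-c) * (P₁ i * d ^ i) + c * (if i = N then d ^ N else 0) := by
        intro i _
        simp only [hP₂]
        by_cases h : i = N <;> simp [h] <;> ring
      rw [Finset.sum_congr rfl hterm, Finset.sum_add_distrib, ← Finset.mul_sum, ← Finset.mul_sum,
        Finset.sum_ite_eq' (Finset.range n) N (fun _ => d ^ N), if_pos (Finset.mem_range.2 hNn)]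
    rw [hsplit]
    have h1 : 0 ≤ ∑ i ∈ Finset.range n, P₁ i * d ^ i :=
      Finset.sum_nonneg fun i _ => mul_nonneg (hP1n i) (pow_nonneg hd0 i)
    have h2 : d ^ N ≤ 1 := pow_le_one₀ hd0 hd1
    nlinarith [mul_nonneg hc0.le h1, mul_le_mul_of_nonneg_left h2 hc0.le]
  -- output distributions
  obtain ⟨Q₁, hQ1def⟩ : ∃ Q : ℕ → ℝ, ∀ j, Q j = ∑ i ∈ Finset.range n, P₁ i * Ptrans d i j :=
    ⟨_, fun _ => rfl⟩
  obtain ⟨Q₂, hQ2def⟩ : ∃ Q : ℕ → ℝ, ∀ j, Q j = ∑ i ∈ Finset.range n, P₂ i * Ptrans d i j :=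
    ⟨_, fun _ => rfl⟩
  have hQ1t : ∀ j, (∑' i' : ℕ, P₁ i' * Ptrans d i' j) = Q₁ j := fun j => by
    rw [hQ1def j]; exact tsum_eq_sum fun i hi => by rw [hP1z' i hi, zero_mul]
  have hQ2t : ∀ j, (∑' i' : ℕ, P₂ i' * Ptrans d i' j) = Q₂ j := fun j => by
    rw [hQ2def j]; exact tsum_eq_sum fun i hi => by rw [hP2z' i hi, zero_mul]
  have hQ1nn : ∀ j, 0 ≤ Q₁ j := fun j => (hQ1def j) ▸
    Finset.sum_nonneg fun i _ => mul_nonneg (hP1n i) (Ptrans_nonneg hd0 hd1 i j)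
  have hQrel : ∀ j, Q₂ j = (1-c) * Q₁ j + c * Ptrans d N j := by
    intro j
    rw [hQ2def j, hQ1def j]
    have hterm : ∀ i ∈ Finset.range n, P₂ i * Ptrans d i j
        = (1-c) * (P₁ i * Ptrans d i j) + c * (if i = N then Ptrans d N j else 0) := by
      intro i _
      simp only [hP₂]
      by_cases h : i = N <;> simp [h] <;> ring
    rw [Finset.sum_congr rfl hterm, Finset.sum_add_distrib, ← Finset.mul_sum, ← Finset.mul_sum,
      Finset.sum_ite_eq' (Finset.range n) N (fun _ => Ptrans d N j), if_pos (Finset.mem_range.2 hNn)]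
  have hQ2nn : ∀ j, 0 ≤ Q₂ j := fun j => (hQ2def j) ▸
    Finset.sum_nonneg fun i _ => mul_nonneg (hP2n i) (Ptrans_nonneg hd0 hd1 i j)
  have hQ1s : ∑ j ∈ Finset.range n, Q₁ j = 1 := by
    have hrow : ∀ i ∈ Finset.range n, ∑ j ∈ Finset.range n, P₁ i * Ptrans d i j = P₁ i := by
      intro i hi
      rw [← Finset.mul_sum, Ptrans_rowsum i n (Finset.mem_range.1 hi), mul_one]
    rw [Finset.sum_congr rfl (fun j _ => hQ1def j), Finset.sum_comm,
      Finset.sum_congr rfl hrow, hS1]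
  have hrowN : ∑ j ∈ Finset.range n, Ptrans d N j = 1 := Ptrans_rowsum N n hNn
  have hQ2s : ∑ j ∈ Finset.range n, Q₂ j = 1 := by
    rw [Finset.sum_congr rfl (fun j _ => hQrel j), Finset.sum_add_distrib,
      ← Finset.mul_sum, ← Finset.mul_sum, hQ1s, hrowN]
    ring
  -- Rmem as a finite sum
  have hRm : ∀ (P Q : ℕ → ℝ), (∀ i ∉ Finset.range n, P i = 0) →
      (∀ j, (∑' i' : ℕ, P i' * Ptrans d i' j) = Q j) →
      Rmem d P = ∑ i ∈ Finset.range n, ∑ j ∈ Finset.range n,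
        P i * Ptrans d i j * Real.logb 2 (Ptrans d i j / Q j) := by
    intro P Q hz hq
    unfold Rmem
    simp only [hq]
    rw [tsum_eq_sum (s := Finset.range n) (fun i hi => by simp [hz i hi])]
    refine Finset.sum_congr rfl fun i hi => ?_
    refine tsum_eq_sum fun j hj => ?_
    have h0 : Ptrans d i j = 0 := Ptrans_zero (by simp at hi hj ⊢; omega)
    simp [h0]
  have hR1 : Rmem d P₁ = ∑ i ∈ Finset.range n, ∑ j ∈ Finset.range n,
      P₁ i * Ptrans d i j * Real.logb 2 (Ptrans d i j / Q₁ j) := hRm P₁ Q₁ hP1z' hQ1t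
  have hR2 : Rmem d P₂ = ∑ i ∈ Finset.range n, ∑ j ∈ Finset.range n,
      P₂ i * Ptrans d i j * Real.logb 2 (Ptrans d i j / Q₂ j) := hRm P₂ Q₂ hP2z' hQ2t
  -- pointwise log split
  have hsplit : ∀ i ∈ Finset.range n, ∀ j ∈ Finset.range n,
      P₁ i * Ptrans d i j * Real.logb 2 (Ptrans d i j / Q₂ j)
      = P₁ i * Ptrans d i j * Real.logb 2 (Ptrans d i j / Q₁ j)
        + P₁ i * Ptrans d i j * Real.logb 2 (Q₁ j / Q₂ j) := by
    intro i hi j hj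
    rcases eq_or_ne (P₁ i * Ptrans d i j) 0 with h | h
    · rw [h]; ring
    · have hA : Ptrans d i j ≠ 0 := fun h' => h (by rw [h', mul_zero])
      have hApos : 0 < Ptrans d i j := (Ptrans_nonneg hd0 hd1 i j).lt_of_ne' hA
      have hterm : 0 < P₁ i * Ptrans d i j :=
        lt_of_le_of_ne (mul_nonneg (hP1n i) hApos.le) (Ne.symm h)
      have hQ1pos : 0 < Q₁ j := by
        rw [hQ1def j]
        exact lt_of_lt_of_le hterm (Finset.single_le_sum
          (f := fun k => P₁ k * Ptrans d k j)
          (fun k _ => mul_nonneg (hP1n k) (Ptrans_nonneg hd0 hd1 k j)) hi)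
      have hQ2pos : 0 < Q₂ j := by
        rw [hQrel j]
        have := Ptrans_nonneg hd0 hd1 N j
        nlinarith
      rw [Real.logb_div hA hQ2pos.ne', Real.logb_div hA hQ1pos.ne',
        Real.logb_div hQ1pos.ne' hQ2pos.ne']
      ring
  -- Gibbs inequalities
  have hG1 : 0 ≤ ∑ j ∈ Finset.range n, Q₁ j * Real.logb 2 (Q₁ j / Q₂ j) := by
    refine gibbs _ _ _ (fun j _ => hQ1nn j) (fun j _ => hQ2nn j) ?_ (by rw [hQ1s, hQ2s])
    intro j _ hne
    rw [hQrel j]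
    have h1 : 0 < Q₁ j := (hQ1nn j).lt_of_ne' hne
    have := Ptrans_nonneg hd0 hd1 N j
    nlinarith
  have hG2 : 0 ≤ ∑ j ∈ Finset.range n, Ptrans d N j * Real.logb 2 (Ptrans d N j / Q₂ j) := by
    refine gibbs _ _ _ (fun j _ => Ptrans_nonneg hd0 hd1 N j) (fun j _ => hQ2nn j) ?_
      (by rw [hQ2s, hrowN])
    intro j _ hne
    rw [hQrel j]
    have h1 : 0 < Ptrans d N j := (Ptrans_nonneg hd0 hd1 N j).lt_of_ne' hne
    nlinarith [hQ1nn j]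
  -- expansion of Rmem d P₂
  have hexp : ∑ i ∈ Finset.range n, ∑ j ∈ Finset.range n,
      P₂ i * Ptrans d i j * Real.logb 2 (Ptrans d i j / Q₂ j)
      = (1-c) * ∑ i ∈ Finset.range n, ∑ j ∈ Finset.range n,
          P₁ i * Ptrans d i j * Real.logb 2 (Ptrans d i j / Q₂ j)
        + c * ∑ j ∈ Finset.range n, Ptrans d N j * Real.logb 2 (Ptrans d N j / Q₂ j) := by
    have step : ∀ i ∈ Finset.range n,
        ∑ j ∈ Finset.range n, P₂ i * Ptrans d i j * Real.logb 2 (Ptrans d i j / Q₂ j)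
        = (1-c) * ∑ j ∈ Finset.range n, P₁ i * Ptrans d i j * Real.logb 2 (Ptrans d i j / Q₂ j)
          + (if i = N then c * ∑ j ∈ Finset.range n,
              Ptrans d N j * Real.logb 2 (Ptrans d N j / Q₂ j) else 0) := by
      intro i _
      by_cases h : i = N
      · subst h
        rw [if_pos rfl, Finset.mul_sum, Finset.mul_sum, ← Finset.sum_add_distrib]
        refine Finset.sum_congr rfl fun j _ => ?_
        simp only [hP₂, eq_self_iff_true, if_true]
        ring
      · rw [if_neg h, add_zero, Finset.mul_sum]
        refine Finset.sum_congr rfl fun j _ => ?_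
        simp only [hP₂, if_neg h]
        ring
    rw [Finset.sum_congr rfl step, Finset.sum_add_distrib, ← Finset.mul_sum,
      Finset.sum_ite_eq' (Finset.range n) N _, if_pos (Finset.mem_range.2 hNn)]
  -- middle term rewrite
  have hmid : ∑ i ∈ Finset.range n, ∑ j ∈ Finset.range n,
      P₁ i * Ptrans d i j * Real.logb 2 (Ptrans d i j / Q₂ j)
      = Rmem d P₁ + ∑ j ∈ Finset.range n, Q₁ j * Real.logb 2 (Q₁ j / Q₂ j) := by
    rw [hR1,
      Finset.sum_congr rfl (fun i hi => Finset.sum_congr rfl (fun j hj => hsplit i hi j hj)),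
      Finset.sum_congr rfl (fun i _ => Finset.sum_add_distrib), Finset.sum_add_distrib]
    congr 1
    rw [Finset.sum_comm]
    refine Finset.sum_congr rfl fun j _ => ?_
    rw [← Finset.sum_mul, ← hQ1def j]
  have hRineq : Rmem d P₂ ≥ Rmem d P₁ - c * Rmem d P₁ := by
    rw [hR2, hexp, hmid]
    nlinarith [mul_nonneg (by linarith : (0:ℝ) ≤ 1-c) hG1, mul_nonneg hc0.le hG2]
  refine ⟨hLmean2, ?_⟩
  unfold hPen
  have hmul : Δ * (∑' i, P₂ i * d ^ i) ≤ Δ * ((∑' i, P₁ i * d ^ i) + c) :=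
    mul_le_mul_of_nonneg_left hD2 hΔ
  nlinarith [hRineq, hmul]
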